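/- Let Ω be an n-dimensional F_q-vector space, x a subspace of codimension t, and 0 ≤ k ≤ n, 0 ≤ r ≤ n. Then the number of r-dimensional subspaces x_r with dim(x_r/(x_r ∩ x)) = k equals q^{k(n-t-r+k)} [t choose k]_q [n-t choose r-k]_q. -/

import Mathlib

noncomputable def qPoch (q : ℚ) (k : ℕ) : ℚ := ∏ j ∈ Finset.range k, (1 - q ^ (j + 1))

/-- Gaussian binomial coefficient `[m choose k]_q`, interpreted as `0` when
`k < 0` or `k > m`. -/
noncomputable def qBinomZ (q : ℚ) (m : ℕ) (k : ℤ) : ℚ :=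
  if 0 ≤ k ∧ k ≤ m then qPoch q m / (qPoch q k.toNat * qPoch q (m - k.toNat)) else 0


set_option linter.unusedSectionVars false
set_option maxHeartbeats 1000000
open Module Submodule LinearMap Finset

section aux
variable {K V : Type*} [Field K] [Fintype K] [AddCommGroup V] [Module K V]

lemma indep_comp_iff_mkQ {Z : Type*} [AddCommGroup Z] [Module K Z] (f : V →ₗ[K] Z)
    {ι : Type*} (b : ι → V) :
    LinearIndependent K (f ∘ b) ↔ LinearIndependent K ((LinearMap.ker f).mkQ ∘ b) := by
  have hg : LinearMap.ker ((LinearMap.ker f).liftQ f le_rfl) = ⊥ :=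
    Submodule.ker_liftQ_eq_bot _ _ le_rfl le_rfl
  have h : f ∘ b = ((LinearMap.ker f).liftQ f le_rfl) ∘ ((LinearMap.ker f).mkQ ∘ b) := by
    funext i; simp
  rw [h, LinearMap.linearIndependent_iff _ hg]

lemma disjoint_span_of_indep_mkQ {k : ℕ} {p : Submodule K V} {b : Fin k → V}
    (hb : LinearIndependent K (p.mkQ ∘ b)) : Disjoint p (span K (Set.range b)) := by
  rw [Submodule.disjoint_def]
  intro y hy hyspan
  obtain ⟨c, rfl⟩ := (mem_span_range_iff_exists_fun K).1 hyspan
  have h0 : ∑ i, c i • (p.mkQ ∘ b) i = 0 := by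
    have : p.mkQ (∑ i, c i • b i) = 0 := (Submodule.Quotient.mk_eq_zero p).2 hy
    simpa using this
  have hz := Fintype.linearIndependent_iff.1 hb c h0
  simp [hz]

lemma main_span (x : Submodule K V) {s k : ℕ} (a : Fin s → x) (b : Fin k → V)
    (ha : LinearIndependent K a) (hb : LinearIndependent K (x.mkQ ∘ b)) :
    LinearIndependent K (Sum.elim (fun i => (a i : V)) b) ∧
    span K (Set.range (Sum.elim (fun i => (a i : V)) b)) ⊓ x
      = span K (Set.range (fun i => (a i : V))) := by
  have ha' : LinearIndependent K (fun i => (a i : V)) := ha.map' x.subtype x.ker_subtype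
  have hb' : LinearIndependent K b := hb.of_comp x.mkQ
  have hax : span K (Set.range (fun i => (a i : V))) ≤ x := by
    rw [span_le]; rintro _ ⟨i, rfl⟩; exact (a i).2
  have hdisj : Disjoint (span K (Set.range (fun i => (a i : V)))) (span K (Set.range b)) :=
    (disjoint_span_of_indep_mkQ hb).mono_left hax
  refine ⟨ha'.sum_type hb' hdisj, ?_⟩
  apply le_antisymm
  · rintro y ⟨hy1, hy2⟩
    rw [Set.Sum.elim_range, Submodule.span_union] at hy1
    obtain ⟨y1, hy1', y2, hy2', rfl⟩ := Submodule.mem_sup.1 hy1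
    have hz : y2 ∈ x := by
      have h1 : y1 ∈ x := hax hy1'
      have : y1 + y2 ∈ x := hy2
      simpa using x.sub_mem this h1
    have : y2 = 0 := (Submodule.disjoint_def.1 (disjoint_span_of_indep_mkQ hb)) y2 hz hy2'
    simpa [this] using hy1'
  · refine le_inf ?_ hax
    apply span_mono
    rw [Set.Sum.elim_range]
    exact Set.subset_union_left

lemma finrank_ker_mkQ_comp_subtype [FiniteDimensional K V] (x W : Submodule K V) :
    finrank K (LinearMap.ker (x.mkQ ∘ₗ W.subtype)) = finrank K ↥(W ⊓ x) := by
  have h1 : LinearMap.ker (x.mkQ ∘ₗ W.subtype) = Submodule.comap W.subtype (W ⊓ x) := by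
    ext z
    simp only [LinearMap.mem_ker, LinearMap.comp_apply, Submodule.coe_subtype,
      Submodule.mem_comap, Submodule.mem_inf]
    rw [show x.mkQ ↑z = Submodule.Quotient.mk ↑z from rfl, Submodule.Quotient.mk_eq_zero x]
    simp [z.2]
  rw [h1]
  exact LinearEquiv.finrank_eq (Submodule.comapSubtypeEquivOfLe inf_le_left)

lemma card_indep_mkQ [FiniteDimensional K V] (p : Submodule K V) (k : ℕ)
    (hk : k ≤ finrank K (V ⧸ p)) :
    Nat.card {b : Fin k → V // LinearIndependent K (p.mkQ ∘ b)} =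
      (Fintype.card K) ^ (finrank K p * k) *
        ∏ j ∈ Finset.range k,
          ((Fintype.card K) ^ (finrank K (V ⧸ p)) - (Fintype.card K) ^ j) := by
  haveI : Finite V := Module.finite_of_finite K
  haveI : Finite (V ⧸ p) := Finite.of_surjective p.mkQ p.mkQ_surjective
  obtain ⟨C, hC⟩ := Submodule.exists_isCompl p
  let e := Submodule.quotientEquivOfIsCompl p C hC
  have key : ∀ z : V ⧸ p, p.mkQ ((e z : V)) = z := fun z =>
    Submodule.mk_quotientEquivOfIsCompl_apply hC z
  let E : {b : Fin k → V // LinearIndependent K (p.mkQ ∘ b)} ≃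
      (Fin k → p) × {c : Fin k → V ⧸ p // LinearIndependent K c} :=
    { toFun := fun b => ⟨fun i => p.linearProjOfIsCompl C hC (b.1 i), ⟨p.mkQ ∘ b.1, b.2⟩⟩
      invFun := fun gc => ⟨fun i => (gc.1 i : V) + (e (gc.2.1 i) : V), by
        have h : (p.mkQ ∘ fun i => (gc.1 i : V) + (e (gc.2.1 i) : V)) = gc.2.1 := by
          funext i
          simp only [Function.comp_apply, map_add, key]
          rw [show p.mkQ (gc.1 i : V) = 0 from (Submodule.Quotient.mk_eq_zero p).2 (gc.1 i).2]
          simp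
        rw [h]; exact gc.2.2⟩
      left_inv := fun b => by
        apply Subtype.ext
        funext i
        have hd : ∀ y : V, (↑(p.linearProjOfIsCompl C hC y) : V) + (e (p.mkQ y) : V) = y := by
          intro y
          have h1 : p.mkQ y = p.mkQ ↑(C.linearProjOfIsCompl p hC.symm y) := by
            rw [← sub_eq_zero, ← map_sub, Submodule.mkQ_apply, Submodule.Quotient.mk_eq_zero]
            have := Submodule.projection_add_projection_eq_self hC y
            have h2 : y - ↑(C.linearProjOfIsCompl p hC.symm y)
                = ↑(p.linearProjOfIsCompl C hC y) := by
              exact (eq_sub_of_add_eq this).symm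
            rw [h2]; exact (p.linearProjOfIsCompl C hC y).2
          have h3 : e (p.mkQ y) = C.linearProjOfIsCompl p hC.symm y := by
            rw [h1, Submodule.mkQ_apply]
            exact Submodule.quotientEquivOfIsCompl_apply_mk_right hC _
          rw [h3]
          exact Submodule.projection_add_projection_eq_self hC y
        exact hd (b.1 i)
      right_inv := fun gc => by
        refine Prod.ext ?_ (Subtype.ext ?_)
        · funext i
          simp only []
          erw [map_add, Submodule.projectionOnto_apply_left,
            Submodule.projectionOnto_apply_of_mem_right hC (e (gc.2.1 i)).2, add_zero]
        · funext i
          simp only [Function.comp_apply, map_add, key]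
          rw [show p.mkQ (gc.1 i : V) = 0 from (Submodule.Quotient.mk_eq_zero p).2 (gc.1 i).2]
          simp }
  rw [Nat.card_congr E, Nat.card_prod, Nat.card_fun]
  have hp : Nat.card p = (Fintype.card K) ^ finrank K p := by
    haveI : Fintype p := Fintype.ofFinite _
    rw [Nat.card_eq_fintype_card]
    exact card_eq_pow_finrank
  have hq : Nat.card {c : Fin k → V ⧸ p // LinearIndependent K c} =
      ∏ j ∈ Finset.range k,
        ((Fintype.card K) ^ (finrank K (V ⧸ p)) - (Fintype.card K) ^ j) := by
    rw [card_linearIndependent hk]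
    exact Fin.prod_univ_eq_prod_range
      (fun j => (Fintype.card K) ^ (finrank K (V ⧸ p)) - (Fintype.card K) ^ j) k
  rw [hp, hq, Nat.card_eq_fintype_card, Fintype.card_fin, ← pow_mul]

lemma card_core {Ω : Type*} [AddCommGroup Ω] [Module K Ω]
    [FiniteDimensional K Ω] (x : Submodule K Ω) (s k : ℕ)
    (hs : s ≤ finrank K x) (hkt : k ≤ finrank K (Ω ⧸ x)) :
    Nat.card {xr : Submodule K Ω // finrank K xr = k + s ∧
        finrank K ↥(xr ⊓ x) + k = k + s} *
      ((∏ i ∈ range s, ((Fintype.card K)^s - (Fintype.card K)^i)) *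
       ((Fintype.card K)^(s*k) *
         ∏ j ∈ range k, ((Fintype.card K)^k - (Fintype.card K)^j))) =
      (∏ i ∈ range s, ((Fintype.card K)^(finrank K x) - (Fintype.card K)^i)) *
      ((Fintype.card K)^(finrank K x * k) *
        ∏ j ∈ range k, ((Fintype.card K)^(finrank K (Ω ⧸ x)) - (Fintype.card K)^j)) := by
  classical
  haveI : Finite Ω := Module.finite_of_finite K
  haveI : Finite (Submodule K Ω) :=
    Finite.of_injective (fun p => (p : Set Ω)) SetLike.coe_injective
  set q := Fintype.card K with hqdef
  -- the big auxiliary type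
  let A := {p : (Fin s → x) × (Fin k → Ω) //
      LinearIndependent K p.1 ∧ LinearIndependent K (x.mkQ ∘ p.2)}
  -- total count
  have hA : Nat.card A =
      (∏ i ∈ range s, (q^(finrank K x) - q^i)) *
      (q^(finrank K x * k) * ∏ j ∈ range k, (q^(finrank K (Ω ⧸ x)) - q^j)) := by
    have e1 : A ≃ {a : Fin s → x // LinearIndependent K a} ×
        {b : Fin k → Ω // LinearIndependent K (x.mkQ ∘ b)} :=
      Equiv.subtypeProdEquivProd (p := fun a : Fin s → x => LinearIndependent K a)
        (q := fun b : Fin k → Ω => LinearIndependent K (x.mkQ ∘ b))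
    rw [Nat.card_congr e1, Nat.card_prod]
    congr 1
    · rw [card_linearIndependent hs]
      exact Fin.prod_univ_eq_prod_range (fun i => q^(finrank K x) - q^i) s
    · exact card_indep_mkQ x k hkt
  -- the set we want to count
  let S := {xr : Submodule K Ω // finrank K xr = k + s ∧ finrank K ↥(xr ⊓ x) + k = k + s}
  -- the fibration
  have fmem : ∀ p : A, (finrank K (span K (Set.range
        (Sum.elim (fun i => ((p.1.1 i : Ω))) p.1.2))) = k + s ∧
      finrank K ↥((span K (Set.range
        (Sum.elim (fun i => ((p.1.1 i : Ω))) p.1.2))) ⊓ x) + k = k + s) := by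
    intro p
    obtain ⟨hi, hinf⟩ := main_span x p.1.1 p.1.2 p.2.1 p.2.2
    constructor
    · rw [finrank_span_eq_card hi]
      simp [add_comm]
    · rw [hinf, finrank_span_eq_card (show LinearIndependent K (fun i => ((p.1.1 i : Ω))) from
        p.2.1.map' x.subtype x.ker_subtype)]
      simp [add_comm]
  let f : A → S := fun p => ⟨span K (Set.range
      (Sum.elim (fun i => ((p.1.1 i : Ω))) p.1.2)), fmem p⟩
  -- fiber cardinality
  have fib : ∀ W : S, Nat.card {p : A // f p = W} =
      (∏ i ∈ range s, (q^s - q^i)) * (q^(s*k) * ∏ j ∈ range k, (q^k - q^j)) := by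
    intro W
    have hWr : finrank K ↥(W.1) = k + s := W.2.1
    have hWi : finrank K ↥(W.1 ⊓ x) = s := by omega
    -- fiber ≃ B_W
    let g : ↥(W.1) →ₗ[K] Ω ⧸ x := x.mkQ ∘ₗ (W.1).subtype
    have hker : finrank K (LinearMap.ker g) = s := by
      rw [finrank_ker_mkQ_comp_subtype x W.1, hWi]
    have hquot : finrank K (↥(W.1) ⧸ LinearMap.ker g) = k := by
      have h := Submodule.finrank_quotient_add_finrank (LinearMap.ker g)
      rw [hker, hWr] at h
      omega
    let E2 : {p : A // f p = W} ≃
        ({a : Fin s → ↥(W.1 ⊓ x) // LinearIndependent K a} ×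
         {b : Fin k → ↥(W.1) // LinearIndependent K (g ∘ b)}) :=
      { toFun := fun pq => by
          have hp : span K (Set.range
              (Sum.elim (fun i => ((pq.1.1.1 i : Ω))) pq.1.1.2)) = W.1 :=
            congrArg Subtype.val pq.2
          refine ⟨⟨fun i => ⟨(pq.1.1.1 i : Ω), ?_⟩, ?_⟩, ⟨fun j => ⟨pq.1.1.2 j, ?_⟩, ?_⟩⟩
          · exact ⟨hp ▸ subset_span ⟨Sum.inl i, rfl⟩, (pq.1.1.1 i).2⟩
          · exact LinearIndependent.of_comp (W.1 ⊓ x).subtype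
              (pq.1.2.1.map' x.subtype x.ker_subtype)
          · exact hp ▸ subset_span ⟨Sum.inr j, rfl⟩
          · exact pq.1.2.2
        invFun := fun ab => by
          refine ⟨⟨⟨fun i => ⟨(ab.1.1 i : Ω), (ab.1.1 i).2.2⟩, fun j => (ab.2.1 j : Ω)⟩,
            ⟨?_, ?_⟩⟩, ?_⟩
          · exact LinearIndependent.of_comp x.subtype
              ((ab.1.2.map' (W.1 ⊓ x).subtype (W.1 ⊓ x).ker_subtype))
          · exact ab.2.2
          · apply Subtype.ext
            show span K _ = W.1
            have hle : span K (Set.range (Sum.elim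
                (fun i => ((ab.1.1 i : Ω))) (fun j => (ab.2.1 j : Ω)))) ≤ W.1 := by
              rw [span_le]
              rintro _ ⟨i | j, rfl⟩
              · exact (ab.1.1 i).2.1
              · exact (ab.2.1 j).2
            have hind : LinearIndependent K (Sum.elim
                (fun i => (((fun i => (⟨(ab.1.1 i : Ω), (ab.1.1 i).2.2⟩ : x)) i : Ω)))
                (fun j => (ab.2.1 j : Ω))) :=
              (main_span x (fun i => ⟨(ab.1.1 i : Ω), (ab.1.1 i).2.2⟩)
                (fun j => (ab.2.1 j : Ω))
                (LinearIndependent.of_comp x.subtype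
                  ((ab.1.2.map' (W.1 ⊓ x).subtype (W.1 ⊓ x).ker_subtype)))
                ab.2.2).1
            apply Submodule.eq_of_le_of_finrank_le hle
            rw [finrank_span_eq_card hind, hWr]
            simp [add_comm]
        left_inv := fun pq => by
          apply Subtype.ext
          apply Subtype.ext
          refine Prod.ext ?_ ?_
          · funext i; rfl
          · funext j; rfl
        right_inv := fun ab => by
          refine Prod.ext (Subtype.ext ?_) (Subtype.ext ?_)
          · funext i; rfl
          · funext j; rfl }
    rw [Nat.card_congr E2, Nat.card_prod]
    congr 1
    · rw [card_linearIndependent (le_of_eq hWi.symm)]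
      rw [hWi]
      exact Fin.prod_univ_eq_prod_range (fun i => q^s - q^i) s
    · have hiff : ∀ b : Fin k → ↥(W.1), LinearIndependent K (g ∘ b) ↔
          LinearIndependent K ((LinearMap.ker g).mkQ ∘ b) := fun b => indep_comp_iff_mkQ g b
      have e3 : {b : Fin k → ↥(W.1) // LinearIndependent K (g ∘ b)} ≃
          {b : Fin k → ↥(W.1) // LinearIndependent K ((LinearMap.ker g).mkQ ∘ b)} :=
        Equiv.subtypeEquivRight hiff
      rw [Nat.card_congr e3, card_indep_mkQ (LinearMap.ker g) k (le_of_eq hquot.symm),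
        hker, hquot]
  -- put it together
  haveI : Fintype A := Fintype.ofFinite A
  haveI : Fintype S := Fintype.ofFinite S
  haveI : ∀ W : S, Fintype {p : A // f p = W} := fun W => Fintype.ofFinite _
  have hsum : Nat.card A = Nat.card S *
      ((∏ i ∈ range s, (q^s - q^i)) * (q^(s*k) * ∏ j ∈ range k, (q^k - q^j))) := by
    rw [Nat.card_eq_fintype_card (α := A),
      Fintype.card_congr (Equiv.sigmaFiberEquiv f).symm, Fintype.card_sigma]
    rw [Nat.card_eq_fintype_card (α := S)]
    rw [Finset.sum_congr rfl (fun W _ => by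
      rw [← Nat.card_eq_fintype_card, fib W])]
    rw [Finset.sum_const, Finset.card_univ, smul_eq_mul]
  rw [← hsum, hA]

end aux

lemma qpoch_prod (Q : ℚ) (d : ℕ) : ∀ e : ℕ,
    (∏ i ∈ range d, (Q^(d+e) - Q^i)) * qPoch Q e
      = (∏ i ∈ range d, (-(Q^i))) * qPoch Q (d+e) := by
  induction d with
  | zero => intro e; simp
  | succ d ih =>
    intro e
    have h1 : d + 1 + e = d + (e + 1) := by omega
    have h2 : Q^(d+1+e) - Q^d = (-(Q^d)) * (1 - Q^(e+1)) := by
      have h : Q^d * Q^(e+1) = Q^(d+1+e) := by rw [← pow_add]; congr 1; omega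
      linear_combination -h
    have h3 : qPoch Q (e+1) = qPoch Q e * (1 - Q^(e+1)) := by
      rw [qPoch, qPoch, prod_range_succ]
    calc (∏ i ∈ range (d+1), (Q^(d+1+e) - Q^i)) * qPoch Q e
        = ((∏ i ∈ range d, (Q^(d+(e+1)) - Q^i)) * qPoch Q (e+1)) * (-(Q^d)) := by
          rw [prod_range_succ, ← h1, h2, h3]; ring
      _ = ((∏ i ∈ range d, (-(Q^i))) * qPoch Q (d+(e+1))) * (-(Q^d)) := by rw [ih (e+1)]
      _ = (∏ i ∈ range (d+1), (-(Q^i))) * qPoch Q (d+1+e) := by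
          rw [prod_range_succ, h1]; ring

lemma qPoch_ne_zero {Q : ℚ} (hQ : 2 ≤ Q) (m : ℕ) : qPoch Q m ≠ 0 := by
  rw [qPoch]
  apply Finset.prod_ne_zero_iff.2
  intro j _
  have h : (1:ℚ) < Q^(j+1) := one_lt_pow₀ (by linarith) (Nat.succ_ne_zero j)
  linarith

lemma qBinomZ_natCast (Q : ℚ) (m a : ℕ) (h : a ≤ m) :
    qBinomZ Q m (a : ℤ) = qPoch Q m / (qPoch Q a * qPoch Q (m - a)) := by
  rw [qBinomZ, if_pos ⟨Int.natCast_nonneg a, by exact_mod_cast h⟩]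
  simp

/-- If `x` is a subspace of codimension `t` in an `n`-dimensional `F_q`-vector space,
the number of `r`-dimensional subspaces `x_r` with `∂(x_r, x) = dim(x_r/(x_r∩x)) = k`
equals `q^{k(n-t-r+k)} [t choose k]_q [n-t choose r-k]_q`. -/
theorem card_M (q n r t k : ℕ) (K : Type*) [Field K] [Fintype K]
    (hq : Fintype.card K = q)
    (Ω : Type*) [AddCommGroup Ω] [Module K Ω] [FiniteDimensional K Ω]
    (hn : Module.finrank K Ω = n) (hk : k ≤ n) (hr : r ≤ n)
    (x : Submodule K Ω) (hx : Module.finrank K x + t = n) :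
    (Nat.card {xr : Submodule K Ω // Module.finrank K xr = r ∧
        Module.finrank K (xr ⊓ x : Submodule K Ω) + k = r} : ℚ) =
      (q : ℚ) ^ ((k : ℤ) * ((n : ℤ) - t - r + k)) *
        qBinomZ (q : ℚ) t (k : ℤ) * qBinomZ (q : ℚ) (n - t) ((r : ℤ) - k) := by
  subst hq
  subst hn
  classical
  haveI : Finite Ω := Module.finite_of_finite K
  have htq : finrank K (Ω ⧸ x) = t := by
    have h := Submodule.finrank_quotient_add_finrank x
    omega
  have hcard2 : 2 ≤ Fintype.card K := Fintype.one_lt_card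
  set Q : ℚ := ((Fintype.card K : ℕ) : ℚ) with hQdef
  have hQ2 : (2:ℚ) ≤ Q := by rw [hQdef]; exact_mod_cast hcard2
  have hQne : Q ≠ 0 := by linarith
  by_cases hc : k ≤ r ∧ k ≤ t ∧ r - k ≤ finrank K x
  · obtain ⟨hc1, hc2, hc3⟩ := hc
    obtain ⟨s, rfl⟩ : ∃ s, r = k + s := ⟨r - k, by omega⟩
    have hs : s ≤ finrank K x := by omega
    have hkt : k ≤ finrank K (Ω ⧸ x) := by omega
    obtain ⟨e, he⟩ : ∃ e, finrank K x = s + e := ⟨finrank K x - s, by omega⟩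
    obtain ⟨u, hu⟩ : ∃ u, t = k + u := ⟨t - k, by omega⟩
    have core := card_core x s k hs hkt
    rw [he, htq, hu] at core
    have cast_prod : ∀ m dd : ℕ, dd ≤ m →
        (((∏ i ∈ range dd, ((Fintype.card K)^m - (Fintype.card K)^i)) : ℕ) : ℚ)
          = ∏ i ∈ range dd, (Q^m - Q^i) := by
      intro m dd hdm
      rw [Nat.cast_prod]
      refine Finset.prod_congr rfl fun i hi => ?_
      have hle : (Fintype.card K)^i ≤ (Fintype.card K)^m :=
        Nat.pow_le_pow_right (by omega) (by have := mem_range.1 hi; omega)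
      rw [Nat.cast_sub hle]
      push_cast
      rfl
    have coreQ : (Nat.card {xr : Submodule K Ω // finrank K xr = k + s ∧
          finrank K (xr ⊓ x : Submodule K Ω) + k = k + s} : ℚ) *
        ((∏ i ∈ range s, (Q^s - Q^i)) * (Q^(s*k) * ∏ j ∈ range k, (Q^k - Q^j))) =
        (∏ i ∈ range s, (Q^(s+e) - Q^i)) *
          (Q^((s+e)*k) * ∏ j ∈ range k, (Q^(k+u) - Q^j)) := by
      have hcast := congrArg (fun z : ℕ => (z : ℚ)) core
      simp only [Nat.cast_mul, Nat.cast_pow] at hcast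
      rw [cast_prod s s le_rfl, cast_prod (s+e) s (by omega),
        cast_prod k k le_rfl, cast_prod (k+u) k (by omega)] at hcast
      exact hcast
    have hpos : ∀ m : ℕ, ∀ i ∈ range m, (0:ℚ) < Q^m - Q^i := by
      intro m i hi
      have := pow_lt_pow_right₀ (show (1:ℚ) < Q by linarith) (mem_range.1 hi)
      linarith
    have hQ0 : (0:ℚ) < Q := by linarith
    have hF : (0:ℚ) < (∏ i ∈ range s, (Q^s - Q^i)) *
        (Q^(s*k) * ∏ j ∈ range k, (Q^k - Q^j)) := by
      apply mul_pos (Finset.prod_pos (hpos s)) (mul_pos (pow_pos hQ0 _)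
        (Finset.prod_pos (hpos k)))
    have hN := eq_div_of_mul_eq hF.ne' coreQ
    rw [hN]
    have h5 : (Q : ℚ) ^ ((k:ℤ) * ((finrank K Ω : ℤ) - (t:ℤ) - ((k+s : ℕ) : ℤ) + (k:ℤ)))
        = Q ^ (k * e) := by
      have hΩ : finrank K Ω = s + e + t := by omega
      have hexp : ((k:ℤ) * ((finrank K Ω : ℤ) - (t:ℤ) - ((k+s : ℕ) : ℤ) + (k:ℤ)))
          = ((k*e : ℕ) : ℤ) := by
        rw [hΩ]; push_cast; ring
      rw [hexp, zpow_natCast]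
    have h6 : finrank K Ω - t = s + e := by omega
    have h7 : ((k+s : ℕ) : ℤ) - ((k:ℕ) : ℤ) = ((s : ℕ) : ℤ) := by push_cast; ring
    rw [h5, h6, h7, qBinomZ_natCast Q t k (by omega), qBinomZ_natCast Q (s+e) s (by omega)]
    have h8 : t - k = u := by omega
    have h9 : s + e - s = e := by omega
    rw [h8, h9, hu]
    have hp1 : (∏ i ∈ range s, (Q^(s+e) - Q^i))
        = (∏ i ∈ range s, (-(Q^i))) * qPoch Q (s+e) / qPoch Q e := by
      rw [eq_div_iff (qPoch_ne_zero hQ2 e)]; exact qpoch_prod Q s e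
    have hp2 : (∏ j ∈ range k, (Q^(k+u) - Q^j))
        = (∏ j ∈ range k, (-(Q^j))) * qPoch Q (k+u) / qPoch Q u := by
      rw [eq_div_iff (qPoch_ne_zero hQ2 u)]; exact qpoch_prod Q k u
    have hp3 : (∏ i ∈ range s, (Q^s - Q^i)) = (∏ i ∈ range s, (-(Q^i))) * qPoch Q s := by
      have h := qpoch_prod Q s 0
      simpa [qPoch] using h
    have hp4 : (∏ j ∈ range k, (Q^k - Q^j)) = (∏ j ∈ range k, (-(Q^j))) * qPoch Q k := by
      have h := qpoch_prod Q k 0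
      simpa [qPoch] using h
    rw [hp1, hp2, hp3, hp4]
    have hsigs : (∏ i ∈ range s, (-(Q^i))) ≠ 0 :=
      Finset.prod_ne_zero_iff.2 fun i _ => neg_ne_zero.2 (pow_ne_zero i hQne)
    have hsigk : (∏ j ∈ range k, (-(Q^j))) ≠ 0 :=
      Finset.prod_ne_zero_iff.2 fun j _ => neg_ne_zero.2 (pow_ne_zero j hQne)
    have hq1 := qPoch_ne_zero hQ2 s
    have hq2 := qPoch_ne_zero hQ2 e
    have hq3 := qPoch_ne_zero hQ2 k
    have hq4 := qPoch_ne_zero hQ2 u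
    have hq5 := qPoch_ne_zero hQ2 (s+e)
    have hq6 := qPoch_ne_zero hQ2 (k+u)
    field_simp
    ring
  · have hempty : IsEmpty {xr : Submodule K Ω // finrank K xr = r ∧
        finrank K (xr ⊓ x : Submodule K Ω) + k = r} := by
      refine ⟨fun W => ?_⟩
      obtain ⟨xr, h1, h2⟩ := W
      have hm1 : finrank K (xr ⊓ x : Submodule K Ω) ≤ finrank K x :=
        Submodule.finrank_mono inf_le_right
      have hm2 : k ≤ t := by
        have hg := LinearMap.finrank_range_add_finrank_ker (x.mkQ ∘ₗ xr.subtype)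
        rw [finrank_ker_mkQ_comp_subtype x xr] at hg
        have hle : finrank K (LinearMap.range (x.mkQ ∘ₗ xr.subtype)) ≤ finrank K (Ω ⧸ x) :=
          Submodule.finrank_le _
        omega
      exact hc ⟨by omega, hm2, by omega⟩
    rw [Nat.card_of_isEmpty, Nat.cast_zero]
    rcases Nat.lt_or_ge r k with hlt | hge
    · rw [show qBinomZ Q (finrank K Ω - t) ((r:ℤ) - (k:ℤ)) = 0 from ?_, mul_zero]
      rw [qBinomZ, if_neg]
      rintro ⟨ha, -⟩
      omega
    · rcases Nat.lt_or_ge t k with hlt2 | hge2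
      · rw [show qBinomZ Q t ((k:ℕ) : ℤ) = 0 from ?_, mul_zero, zero_mul]
        rw [qBinomZ, if_neg]
        rintro ⟨-, hb⟩
        omega
      · have hc3 : ¬ (r - k ≤ finrank K x) := by
          intro h; exact hc ⟨hge, hge2, h⟩
        rw [show qBinomZ Q (finrank K Ω - t) ((r:ℤ) - (k:ℤ)) = 0 from ?_, mul_zero]
        rw [qBinomZ, if_neg]
        rintro ⟨-, hb⟩
        omega
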